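/- arXiv:1902.06253 — 5 statements merged into one kernel-verified Lean document; each statement's English description precedes it below -/
import Mathlib

section
/- Let L be a regular language given by a DFA M = (Q, Σ, δ, {s}, F), and suppose L = L₁ · L₂ for languages L₁, L₂. Let P = {q ∈ Q | ∃w ∈ L₁, δ(s,w) = q}. Then L₁ ⊆ L₁(P), L₂ ⊆ L₂(P), and L = L₁(P) · L₂(P). -/
/-- `L₁(P) = {w | δ(s,w) ∈ P}`. -/
def langOne {α σ : Type*} (M : DFA α σ) (P : Set σ) : Language α :=
  {w | M.eval w ∈ P}

/-- `L₂(P) = ⋂_{p ∈ P} {w | δ(p,w) ∈ F}`. -/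
def langTwo {α σ : Type*} (M : DFA α σ) (P : Set σ) : Language α :=
  {w | ∀ p ∈ P, M.evalFrom p w ∈ M.accept}

/-- If `L(M) = L₁ ⋅ L₂`, and `P` is the set of border states reached by words of `L₁`,
then `L₁ ⊆ L₁(P)`, `L₂ ⊆ L₂(P)` and `L(M) = L₁(P) ⋅ L₂(P)`. -/
theorem stmt1 {α σ : Type*} (M : DFA α σ) (L₁ L₂ : Language α)
    (h : L₁ * L₂ = M.accepts)
    (P : Set σ) (hP : P = {q | ∃ w ∈ L₁, M.eval w = q}) :
    L₁ ≤ langOne M P ∧ L₂ ≤ langTwo M P ∧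
      M.accepts = langOne M P * langTwo M P := by
  have h1 : L₁ ≤ langOne M P := fun w hw => by
    simp only [langOne, Set.mem_setOf_eq, hP]
    exact ⟨w, hw, rfl⟩
  have h2 : L₂ ≤ langTwo M P := by
    intro w hw p hp
    rw [hP] at hp
    obtain ⟨u, hu, rfl⟩ := hp
    have : u ++ w ∈ M.accepts := h ▸ Language.mem_mul.mpr ⟨u, hu, w, hw, rfl⟩
    rwa [DFA.mem_accepts, DFA.eval, DFA.evalFrom_of_append] at this
  refine ⟨h1, h2, le_antisymm ?_ ?_⟩
  · rw [← h]; exact mul_le_mul' h1 h2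
  · intro w hw
    obtain ⟨u, hu, v, hv, rfl⟩ := Language.mem_mul.mp hw
    show u ++ v ∈ (M.accepts : Language α)
    rw [DFA.mem_accepts, DFA.eval, DFA.evalFrom_of_append]
    exact hv _ hu
end

section
/- Let Σ be an alphabet, Σ' a disjoint copy of Σ with bijection a ↦ a', and $ a fresh symbol not in Σ ∪ Σ'. Let L₁, L₂ be nonempty languages over Σ with primed copies L₁', L₂' over Σ', and let L be a language over Σ with L ≠ ∅ and L ≠ {ε}. Define A = L ∪ L₁$L₂' ∪ L₁'$L₂ ∪ L₁'$$L₂'. If A = A_l · A_r is a decomposition with A_l ≠ {ε} ≠ A_r, then A_l ⊆ Σ* ∪ Σ'*$ and A_r ⊆ Σ* ∪ $Σ'*. -/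
/-- The combined alphabet `Σ ∪ Σ' ∪ {$}`: `Sum.inl a` is the plain letter `a`,
`Sum.inr (Sum.inl a)` is the primed copy `a'`, and `Sum.inr (Sum.inr ())` is `$`. -/
abbrev Alph (α : Type) : Type := α ⊕ (α ⊕ Unit)

/-- plain letter -/
def pl {α : Type} (a : α) : Alph α := Sum.inl a

/-- primed letter -/
def pr {α : Type} (a : α) : Alph α := Sum.inr (Sum.inl a)

/-- the fresh letter `$` -/
def dol {α : Type} : Alph α := Sum.inr (Sum.inr ())

/-- letterwise image of a language over `Σ` -/
def lmap {α : Type} (f : α → Alph α) (L : Language α) : Language (Alph α) :=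
  {w | ∃ v ∈ L, w = v.map f}

/-- `Σ*` : words using only plain letters -/
def plainStar (α : Type) : Language (Alph α) := {w | ∀ c ∈ w, ∃ a, c = pl a}

/-- `Σ'*` : words using only primed letters -/
def primedStar (α : Type) : Language (Alph α) := {w | ∀ c ∈ w, ∃ a, c = pr a}

/-- `A = L ∪ L₁$L₂' ∪ L₁'$L₂ ∪ L₁'$$L₂'` -/
def bigA {α : Type} (L L₁ L₂ : Language α) : Language (Alph α) :=
  lmap pl L ⊔ lmap pl L₁ * {[dol]} * lmap pr L₂ ⊔ lmap pr L₁ * {[dol]} * lmap pl L₂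
    ⊔ lmap pr L₁ * {[dol, dol]} * lmap pr L₂

namespace Stmt6Aux

variable {α : Type} {β : Type}

def AllPl {α : Type} (w : List (Alph α)) : Prop := ∀ c ∈ w, ∃ a, c = pl a
def AllPr {α : Type} (w : List (Alph α)) : Prop := ∀ c ∈ w, ∃ a, c = pr a

lemma AllPl.dol_notmem {w : List (Alph α)} (h : AllPl w) : dol ∉ w := by
  intro hm
  rcases h dol hm with ⟨a, ha⟩
  simp [dol, pl] at ha

lemma AllPr.dol_notmem {w : List (Alph α)} (h : AllPr w) : dol ∉ w := by
  intro hm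
  rcases h dol hm with ⟨a, ha⟩
  simp [dol, pr] at ha

lemma allPl_append {x y : List (Alph α)} : AllPl (x ++ y) ↔ AllPl x ∧ AllPl y := by
  simp [AllPl, List.mem_append, or_imp, forall_and]

lemma allPr_append {x y : List (Alph α)} : AllPr (x ++ y) ↔ AllPr x ∧ AllPr y := by
  simp [AllPr, List.mem_append, or_imp, forall_and]

lemma allPl_allPr_nil {w : List (Alph α)} (h1 : AllPl w) (h2 : AllPr w) : w = [] := by
  cases w with
  | nil => rfl
  | cons c l =>
    rcases h1 c (by simp) with ⟨a, ha⟩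
    rcases h2 c (by simp) with ⟨b, hb⟩
    rw [ha] at hb
    simp [pl, pr] at hb

def Shape {α : Type} (w : List (Alph α)) : Prop :=
  AllPl w
  ∨ (∃ t q, AllPl t ∧ AllPr q ∧ w = t ++ dol :: q)
  ∨ (∃ t q, AllPr t ∧ AllPl q ∧ w = t ++ dol :: q)
  ∨ (∃ t q, AllPr t ∧ AllPr q ∧ w = t ++ dol :: dol :: q)

lemma shape_nodol {w : List (Alph α)} (h : Shape w) (hd : dol ∉ w) : AllPl w := by
  rcases h with h | ⟨t, q, _, _, he⟩ | ⟨t, q, _, _, he⟩ | ⟨t, q, _, _, he⟩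
  · exact h
  all_goals (exfalso; apply hd; rw [he]; simp)

lemma first_split {l : List β} {c : β} (h : c ∈ l) :
    ∃ r s, c ∉ r ∧ l = r ++ c :: s := by
  induction l with
  | nil => simp at h
  | cons a l ih =>
    by_cases hac : a = c
    · exact ⟨[], l, by simp, by simp [hac]⟩
    · rcases List.mem_cons.1 h with h | h
      · exact absurd h.symm hac
      · rcases ih h with ⟨r, s, hcr, he⟩
        refine ⟨a :: r, s, ?_, by simp [he]⟩
        intro hm
        rcases List.mem_cons.1 hm with rfl | hm
        · exact hac rfl
        · exact hcr hm

lemma split_cons {x y t q : List β} {c : β} (h : x ++ y = t ++ c :: q) :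
    (∃ s, x = t ++ c :: s ∧ q = s ++ y) ∨ (∃ s, t = x ++ s ∧ y = s ++ c :: q) := by
  rcases List.append_eq_append_iff.1 h with ⟨s, hs1, hs2⟩ | ⟨s, hs1, hs2⟩
  · exact Or.inr ⟨s, hs1, hs2⟩
  · cases s with
    | nil => exact Or.inr ⟨[], by simpa using hs1.symm, by simpa using hs2.symm⟩
    | cons c' s' =>
      simp only [List.cons_append, List.cons.injEq] at hs2
      exact Or.inl ⟨s', by rw [hs1, hs2.1], hs2.2⟩

lemma split_left {x y t q : List β} {c : β} (h : x ++ y = t ++ c :: q) (hy : c ∉ y) :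
    ∃ s, x = t ++ c :: s ∧ q = s ++ y := by
  rcases split_cons h with h' | ⟨s, hs1, hs2⟩
  · exact h'
  · exact absurd (by rw [hs2]; simp : c ∈ y) hy

lemma split_right {x y t q : List β} {c : β} (h : x ++ y = t ++ c :: q) (hx : c ∉ x) :
    ∃ s, t = x ++ s ∧ y = s ++ c :: q := by
  rcases split_cons h with ⟨s, hs1, _⟩ | h'
  · exact absurd (by rw [hs1]; simp : c ∈ x) hx
  · exact h'

lemma first_eq {x y x' y' : List β} {c : β} (h : x ++ c :: y = x' ++ c :: y')
    (hx : c ∉ x) (hx' : c ∉ x') : x = x' ∧ y = y' := by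
  rcases split_right h hx with ⟨s, hs1, hs2⟩
  cases s with
  | nil =>
    refine ⟨by simpa using hs1.symm, ?_⟩
    simpa using hs2
  | cons c' s' =>
    simp only [List.cons_append, List.cons.injEq] at hs2
    exact absurd (by rw [hs1, ← hs2.1]; simp : c ∈ x') hx'

lemma nil_of_append_eq_cons {s z Q : List β} {c : β} (h : s ++ z = c :: Q) (hs : c ∉ s) :
    s = [] ∧ z = c :: Q := by
  cases s with
  | nil => simpa using h
  | cons a s' =>
    simp only [List.cons_append, List.cons.injEq] at h
    obtain ⟨rfl, -⟩ := h
    exact absurd (by simp) hs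

lemma notmem_append {c : β} {x y : List β} (hx : c ∉ x) (hy : c ∉ y) : c ∉ x ++ y :=
  fun hm => (List.mem_append.1 hm).elim hx hy

lemma shape_split {R REST : List (Alph α)} (h : Shape (R ++ dol :: REST))
    (hR : dol ∉ R) :
    (AllPl R ∧ AllPr REST) ∨ (AllPr R ∧ AllPl REST) ∨
      (AllPr R ∧ ∃ Q, AllPr Q ∧ REST = dol :: Q) := by
  rcases h with h | ⟨t, q, ht, hq, he⟩ | ⟨t, q, ht, hq, he⟩ | ⟨t, q, ht, hq, he⟩
  · exact absurd (by simp : (dol : Alph α) ∈ R ++ dol :: REST) h.dol_notmem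
  · obtain ⟨h1, h2⟩ := first_eq he hR ht.dol_notmem
    exact Or.inl ⟨h1 ▸ ht, h2 ▸ hq⟩
  · obtain ⟨h1, h2⟩ := first_eq he hR ht.dol_notmem
    exact Or.inr (Or.inl ⟨h1 ▸ ht, h2 ▸ hq⟩)
  · obtain ⟨h1, h2⟩ := first_eq he hR ht.dol_notmem
    exact Or.inr (Or.inr ⟨h1 ▸ ht, q, hq, h2⟩)

lemma lmap_pl_allPl {L : Language α} {w : List (Alph α)} (h : w ∈ lmap pl L) : AllPl w := by
  rcases h with ⟨v, _, rfl⟩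
  intro c hc
  rcases List.mem_map.1 hc with ⟨a, _, rfl⟩
  exact ⟨a, rfl⟩

lemma lmap_pr_allPr {L : Language α} {w : List (Alph α)} (h : w ∈ lmap pr L) : AllPr w := by
  rcases h with ⟨v, _, rfl⟩
  intro c hc
  rcases List.mem_map.1 hc with ⟨a, _, rfl⟩
  exact ⟨a, rfl⟩

lemma shape_bigA {L L₁ L₂ : Language α} {w : List (Alph α)} (h : w ∈ bigA L L₁ L₂) :
    Shape w := by
  rcases h with ((h | h) | h) | h
  · exact Or.inl (lmap_pl_allPl h)
  · rcases Language.mem_mul.1 h with ⟨a, ha, b, hb, rfl⟩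
    rcases Language.mem_mul.1 ha with ⟨a1, ha1, a2, ha2, rfl⟩
    rcases Set.mem_singleton_iff.1 ha2 with rfl
    exact Or.inr (Or.inl ⟨a1, b, lmap_pl_allPl ha1, lmap_pr_allPr hb, by simp⟩)
  · rcases Language.mem_mul.1 h with ⟨a, ha, b, hb, rfl⟩
    rcases Language.mem_mul.1 ha with ⟨a1, ha1, a2, ha2, rfl⟩
    rcases Set.mem_singleton_iff.1 ha2 with rfl
    exact Or.inr (Or.inr (Or.inl ⟨a1, b, lmap_pr_allPr ha1, lmap_pl_allPl hb, by simp⟩))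
  · rcases Language.mem_mul.1 h with ⟨a, ha, b, hb, rfl⟩
    rcases Language.mem_mul.1 ha with ⟨a1, ha1, a2, ha2, rfl⟩
    rcases Set.mem_singleton_iff.1 ha2 with rfl
    exact Or.inr (Or.inr (Or.inr ⟨a1, b, lmap_pr_allPr ha1, lmap_pr_allPr hb, by simp⟩))

lemma mem_bigA_pl {L L₁ L₂ : Language α} {w : List α} (h : w ∈ L) :
    w.map pl ∈ bigA L L₁ L₂ :=
  Or.inl (Or.inl (Or.inl ⟨w, h, rfl⟩))

lemma mem_bigA4 {L L₁ L₂ : Language α} {w₁ w₂ : List α} (h1 : w₁ ∈ L₁) (h2 : w₂ ∈ L₂) :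
    (w₁.map pr ++ dol :: dol :: w₂.map pr) ∈ bigA L L₁ L₂ := by
  refine Or.inr (Language.mem_mul.2 ⟨w₁.map pr ++ [dol, dol], ?_, w₂.map pr, ⟨w₂, h2, rfl⟩, by simp⟩)
  exact Language.mem_mul.2 ⟨w₁.map pr, ⟨w₁, h1, rfl⟩, [dol, dol], rfl, rfl⟩

end Stmt6Aux


open Stmt6Aux in
/-- In any non-trivial decomposition `A = A_l ⋅ A_r`, one has
`A_l ⊆ Σ* ∪ Σ'*$` and `A_r ⊆ Σ* ∪ $Σ'*`. -/
theorem stmt6 {α : Type} (L L₁ L₂ : Language α)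
    (h1 : L₁ ≠ 0) (h2 : L₂ ≠ 0) (hL : L ≠ 0) (hLe : L ≠ 1)
    (Al Ar : Language (Alph α)) (hA : Al * Ar = bigA L L₁ L₂)
    (hl : Al ≠ 1) (hr : Ar ≠ 1) :
    Al ≤ plainStar α ⊔ primedStar α * {[dol]} ∧
    Ar ≤ plainStar α ⊔ ({[dol]} : Language (Alph α)) * primedStar α := by
  classical
  -- a nonempty word in L
  obtain ⟨pw, hpwL, hpwne⟩ : ∃ w ∈ L, w ≠ [] := by
    have h0 : ∃ w, w ∈ L := by
      by_contra h0
      push_neg at h0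
      apply hL
      ext w
      simp [h0 w]
    obtain ⟨w0, hw0⟩ := h0
    by_contra hc
    push_neg at hc
    apply hLe
    ext w
    simp only [Language.mem_one]
    constructor
    · exact fun hw => hc w hw
    · rintro rfl
      have h00 := hc w0 hw0
      rwa [h00] at hw0
  obtain ⟨w₁, hw₁⟩ : ∃ w, w ∈ L₁ := by
    by_contra h0
    push_neg at h0
    apply h1
    ext w
    simp [h0 w]
  obtain ⟨w₂, hw₂⟩ : ∃ w, w ∈ L₂ := by
    by_contra h0
    push_neg at h0
    apply h2
    ext w
    simp [h0 w]
  -- every concatenation has the shape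
  have hS : ∀ x ∈ Al, ∀ y ∈ Ar, Shape (x ++ y) := by
    intro x hx y hy
    apply shape_bigA (L := L) (L₁ := L₁) (L₂ := L₂)
    rw [← hA]
    exact Language.mem_mul.2 ⟨x, hx, y, hy, rfl⟩
  -- decompose the plain word
  have hpA : (pw.map pl) ∈ Al * Ar := by
    rw [hA]; exact mem_bigA_pl hpwL
  obtain ⟨x₀, hx₀, y₀, hy₀, hxy₀⟩ := Language.mem_mul.1 hpA
  have hpPl : AllPl (x₀ ++ y₀) := by
    rw [hxy₀]
    exact lmap_pl_allPl ⟨pw, hpwL, rfl⟩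
  have hx₀Pl : AllPl x₀ := (allPl_append.1 hpPl).1
  have hy₀Pl : AllPl y₀ := (allPl_append.1 hpPl).2
  -- nonempty words in the factors
  obtain ⟨u, huAl, hune⟩ : ∃ u ∈ Al, u ≠ [] := by
    by_contra hc
    push_neg at hc
    apply hl
    ext w
    simp only [Language.mem_one]
    constructor
    · exact fun hw => hc w hw
    · rintro rfl
      have h00 := hc x₀ hx₀
      rwa [h00] at hx₀
  obtain ⟨v, hvAr, hvne⟩ : ∃ v ∈ Ar, v ≠ [] := by
    by_contra hc
    push_neg at hc
    apply hr
    ext w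
    simp only [Language.mem_one]
    constructor
    · exact fun hw => hc w hw
    · rintro rfl
      have h00 := hc y₀ hy₀
      rwa [h00] at hy₀
  -- decompose the double-dollar word
  have hwA : (w₁.map pr ++ dol :: dol :: w₂.map pr) ∈ Al * Ar := by
    rw [hA]; exact mem_bigA4 hw₁ hw₂
  obtain ⟨x₁, hx₁Al, y₁, hy₁Ar, hxy₁⟩ := Language.mem_mul.1 hwA
  have hQ₁Pr : AllPr (w₁.map pr) := lmap_pr_allPr ⟨w₁, hw₁, rfl⟩
  have hQ₂Pr : AllPr (w₂.map pr) := lmap_pr_allPr ⟨w₂, hw₂, rfl⟩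
  ----------------------------------------------------------------
  -- PART 1 : structure of Al
  ----------------------------------------------------------------
  have hAl1 : ∀ x ∈ Al, AllPl x ∨ ∃ q, AllPr q ∧ x = q ++ [dol] := by
    intro x hx
    rcases Classical.em ((dol : Alph α) ∈ x) with hdx | hdx
    · obtain ⟨r, s, hdr, rfl⟩ := first_split hdx
      have h0 : Shape (r ++ dol :: (s ++ y₀)) := by
        have h := hS _ hx y₀ hy₀
        rw [List.append_assoc, List.cons_append] at h
        exact h
      rcases shape_split h0 hdr with ⟨hrPl, hPr⟩ | ⟨hrPr, hPl⟩ | ⟨hrPr, Q, hQPr, hEq⟩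
      · -- r plain, (s ++ y₀) primed
        have hsPr : AllPr s := (allPr_append.1 hPr).1
        rcases Classical.em ((dol : Alph α) ∈ v) with hdv | hdv
        · obtain ⟨t₂, q₂, hdt₂, rfl⟩ := first_split hdv
          have hxv : Shape (r ++ dol :: (s ++ (t₂ ++ dol :: q₂))) := by
            have h := hS _ hx _ hvAr
            rw [List.append_assoc, List.cons_append] at h
            exact h
          rcases shape_split hxv hdr with ⟨_, hc⟩ | ⟨_, hc⟩ | ⟨hrPr3, Q', hQ', hc⟩
          · exact absurd (show (dol : Alph α) ∈ s ++ (t₂ ++ dol :: q₂) by simp)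
              hc.dol_notmem
          · exact absurd (show (dol : Alph α) ∈ s ++ (t₂ ++ dol :: q₂) by simp)
              hc.dol_notmem
          · obtain ⟨hs0, _⟩ := nil_of_append_eq_cons hc hsPr.dol_notmem
            have hr0 : r = [] := allPl_allPr_nil hrPl hrPr3
            right
            refine ⟨[], fun c hc' => absurd hc' List.not_mem_nil, ?_⟩
            simp [hr0, hs0]
        · -- dol ∉ v : v is plain
          have hvPl : AllPl v := by
            have h := shape_nodol (hS x₀ hx₀ v hvAr)
              (notmem_append hx₀Pl.dol_notmem hdv)
            exact (allPl_append.1 h).2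
          have hxv : Shape (r ++ dol :: (s ++ v)) := by
            have h := hS _ hx _ hvAr
            rw [List.append_assoc, List.cons_append] at h
            exact h
          rcases shape_split hxv hdr with ⟨_, hc⟩ | ⟨hrPr2, hc⟩ | ⟨_, Q', hQ', hc⟩
          · have hvPr : AllPr v := (allPr_append.1 hc).2
            exact absurd (allPl_allPr_nil hvPl hvPr) hvne
          · have hsPl : AllPl s := (allPl_append.1 hc).1
            have hs0 : s = [] := allPl_allPr_nil hsPl hsPr
            have hr0 : r = [] := allPl_allPr_nil hrPl hrPr2
            right
            refine ⟨[], fun c hc' => absurd hc' List.not_mem_nil, ?_⟩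
            simp [hr0, hs0]
          · obtain ⟨hs0, hveq⟩ := nil_of_append_eq_cons hc hsPr.dol_notmem
            exact absurd (show (dol : Alph α) ∈ v by rw [hveq]; simp) hdv
      · -- r primed, (s ++ y₀) plain
        have hsPl : AllPl s := (allPl_append.1 hPl).1
        rcases Classical.em (s = []) with hs0 | hs0
        · subst hs0
          right
          exact ⟨r, hrPr, by simp⟩
        · exfalso
          rcases Classical.em ((dol : Alph α) ∈ v) with hdv | hdv
          · obtain ⟨t₂, q₂, hdt₂, rfl⟩ := first_split hdv
            have hxv : Shape (r ++ dol :: (s ++ (t₂ ++ dol :: q₂))) := by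
              have h := hS _ hx _ hvAr
              rw [List.append_assoc, List.cons_append] at h
              exact h
            rcases shape_split hxv hdr with ⟨_, hc⟩ | ⟨_, hc⟩ | ⟨_, Q', hQ', hc⟩
            · exact absurd (show (dol : Alph α) ∈ s ++ (t₂ ++ dol :: q₂) by simp)
                hc.dol_notmem
            · exact absurd (show (dol : Alph α) ∈ s ++ (t₂ ++ dol :: q₂) by simp)
                hc.dol_notmem
            · obtain ⟨hs0', _⟩ := nil_of_append_eq_cons hc hsPl.dol_notmem
              exact hs0 hs0'
          · -- dol ∉ v
            have hvPl : AllPl v := by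
              have hxv : Shape (r ++ dol :: (s ++ v)) := by
                have h := hS _ hx _ hvAr
                rw [List.append_assoc, List.cons_append] at h
                exact h
              rcases shape_split hxv hdr with ⟨_, hc⟩ | ⟨_, hc⟩ | ⟨_, Q', hQ', hc⟩
              · exact absurd (allPl_allPr_nil hsPl (allPr_append.1 hc).1) hs0
              · exact (allPl_append.1 hc).2
              · obtain ⟨hs0', _⟩ := nil_of_append_eq_cons hc hsPl.dol_notmem
                exact absurd hs0' hs0
            rcases Classical.em ((dol : Alph α) ∈ y₁) with hdy₁ | hdy₁
            · obtain ⟨t₃, q₃, hdt₃, hy₁eq⟩ := first_split hdy₁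
              have hxy : Shape (r ++ dol :: (s ++ (t₃ ++ dol :: q₃))) := by
                have h := hS _ hx _ hy₁Ar
                rw [hy₁eq, List.append_assoc, List.cons_append] at h
                exact h
              rcases shape_split hxy hdr with ⟨_, hc⟩ | ⟨_, hc⟩ | ⟨_, Q', hQ', hc⟩
              · exact absurd (show (dol : Alph α) ∈ s ++ (t₃ ++ dol :: q₃) by simp)
                  hc.dol_notmem
              · exact absurd (show (dol : Alph α) ∈ s ++ (t₃ ++ dol :: q₃) by simp)
                  hc.dol_notmem
              · obtain ⟨hs0', _⟩ := nil_of_append_eq_cons hc hsPl.dol_notmem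
                exact absurd hs0' hs0
            · -- dol ∉ y₁ : x₁ contains both dollars
              obtain ⟨s₄, hx₁eq, h₄⟩ := split_left hxy₁ hdy₁
              cases s₄ with
              | nil =>
                apply hdy₁
                rw [← (by simpa using h₄ : (dol : Alph α) :: w₂.map pr = y₁)]
                simp
              | cons c s₅ =>
                rw [List.cons_append] at h₄
                simp only [List.cons.injEq] at h₄
                obtain ⟨hcd, hQ₂eq⟩ := h₄
                have hx1v : Shape ((w₁.map pr) ++ dol :: (c :: (s₅ ++ v))) := by
                  have h := hS _ hx₁Al _ hvAr
                  rw [hx₁eq, List.append_assoc, List.cons_append, List.cons_append] at h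
                  exact h
                rcases shape_split hx1v hQ₁Pr.dol_notmem with
                  ⟨_, hc⟩ | ⟨_, hc⟩ | ⟨_, Q', hQ', hc⟩
                · exact hc.dol_notmem (by rw [← hcd]; simp)
                · exact hc.dol_notmem (by rw [← hcd]; simp)
                · simp only [List.cons.injEq] at hc
                  have hPrv : AllPr (s₅ ++ v) := by rw [hc.2]; exact hQ'
                  exact hvne (allPl_allPr_nil hvPl (allPr_append.1 hPrv).2)
      · -- two-dollar branch
        cases s with
        | nil =>
          simp only [List.nil_append] at hEq
          exact absurd (show (dol : Alph α) ∈ y₀ by rw [hEq]; simp)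
            hy₀Pl.dol_notmem
        | cons c s' =>
          rw [List.cons_append] at hEq
          simp only [List.cons.injEq] at hEq
          obtain ⟨hcd, hrest⟩ := hEq
          exfalso
          have hxv : Shape (r ++ dol :: (c :: (s' ++ v))) := by
            have h := hS _ hx _ hvAr
            rw [List.append_assoc, List.cons_append, List.cons_append] at h
            exact h
          rcases shape_split hxv hdr with ⟨_, hc2⟩ | ⟨_, hc2⟩ | ⟨_, Q', hQ', hc2⟩
          · exact hc2.dol_notmem (by rw [hcd]; simp)
          · exact hc2.dol_notmem (by rw [hcd]; simp)
          · simp only [List.cons.injEq] at hc2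
            have hPrv : AllPr (s' ++ v) := by rw [hc2.2]; exact hQ'
            have hvPr : AllPr v := (allPr_append.1 hPrv).2
            rcases Classical.em ((dol : Alph α) ∈ v) with hdv | hdv
            · exact hvPr.dol_notmem hdv
            · have hvPl : AllPl v := by
                have h := shape_nodol (hS x₀ hx₀ v hvAr)
                  (notmem_append hx₀Pl.dol_notmem hdv)
                exact (allPl_append.1 h).2
              exact hvne (allPl_allPr_nil hvPl hvPr)
    · -- dol ∉ x
      left
      have h := shape_nodol (hS _ hx y₀ hy₀)
        (notmem_append hdx hy₀Pl.dol_notmem)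
      exact (allPl_append.1 h).1
  ----------------------------------------------------------------
  -- PART 2 : structure of Ar
  ----------------------------------------------------------------
  have hAr1 : ∀ y ∈ Ar, AllPl y ∨ ∃ q, AllPr q ∧ y = dol :: q := by
    intro y hy
    rcases Classical.em ((dol : Alph α) ∈ y) with hdy | hdy
    · obtain ⟨t, q, hdt, rfl⟩ := first_split hdy
      have h0 : Shape ((x₀ ++ t) ++ dol :: q) := by
        have h := hS x₀ hx₀ _ hy
        rw [← List.append_assoc] at h
        exact h
      have hd0 : dol ∉ x₀ ++ t := notmem_append hx₀Pl.dol_notmem hdt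
      rcases shape_split h0 hd0 with ⟨hPlt, hqPr⟩ | ⟨hPrt, hqPl⟩ | ⟨hPrt, Q, hQPr, hqEq⟩
      · -- (x₀ ++ t) plain, q primed : must show t = []
        have ht0 : t = [] := by
          by_contra ht0
          have key : ∀ ρ, AllPr ρ → (ρ ++ [dol]) ∈ Al → False := by
            intro ρ hρ hmem
            have hsh : Shape (ρ ++ dol :: (t ++ dol :: q)) := by
              have h := hS _ hmem _ hy
              rw [List.append_assoc, List.singleton_append] at h
              exact h
            rcases shape_split hsh hρ.dol_notmem with ⟨_, hc⟩ | ⟨_, hc⟩ | ⟨_, Q', hQ', hc⟩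
            · exact hc.dol_notmem (by simp)
            · exact hc.dol_notmem (by simp)
            · obtain ⟨ht0', _⟩ := nil_of_append_eq_cons hc hdt
              exact ht0 ht0'
          rcases hAl1 u huAl with huPl | ⟨ru, hruPr, hueq⟩
          · rcases hAl1 x₁ hx₁Al with hx₁Pl | ⟨r₁, hr₁Pr, hx₁eq⟩
            · obtain ⟨s₆, hQ₁eq, hy₁eq⟩ := split_right hxy₁ hx₁Pl.dol_notmem
              have hs₆Pr : AllPr s₆ := by
                have h := hQ₁Pr
                rw [hQ₁eq] at h
                exact (allPr_append.1 h).2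
              have hsh : Shape ((u ++ s₆) ++ dol :: (dol :: w₂.map pr)) := by
                have h := hS u huAl _ hy₁Ar
                rw [hy₁eq, ← List.append_assoc] at h
                exact h
              rcases shape_split hsh (notmem_append huPl.dol_notmem hs₆Pr.dol_notmem) with
                ⟨_, hc⟩ | ⟨_, hc⟩ | ⟨hc, _⟩
              · exact hc.dol_notmem (by simp)
              · exact hc.dol_notmem (by simp)
              · exact hune (allPl_allPr_nil huPl (allPr_append.1 hc).1)
            · rw [hx₁eq] at hx₁Al
              exact key r₁ hr₁Pr hx₁Al
          · rw [hueq] at huAl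
            exact key ru hruPr huAl
        subst ht0
        right
        exact ⟨q, hqPr, by simp⟩
      · -- (x₀ ++ t) primed, q plain
        have htPr : AllPr t := (allPr_append.1 hPrt).2
        rcases hAl1 u huAl with huPl | ⟨ru, hruPr, hueq⟩
        · have hsh : Shape ((u ++ t) ++ dol :: q) := by
            have h := hS u huAl _ hy
            rw [← List.append_assoc] at h
            exact h
          rcases shape_split hsh (notmem_append huPl.dol_notmem hdt) with
            ⟨hc1, hc2⟩ | ⟨hc1, _⟩ | ⟨hc1, _⟩
          · have ht0 : t = [] := allPl_allPr_nil (allPl_append.1 hc1).2 htPr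
            subst ht0
            right
            exact ⟨q, hc2, by simp⟩
          · exact absurd (allPl_allPr_nil huPl (allPr_append.1 hc1).1) hune
          · exact absurd (allPl_allPr_nil huPl (allPr_append.1 hc1).1) hune
        · rw [hueq] at huAl
          have hsh : Shape (ru ++ dol :: (t ++ dol :: q)) := by
            have h := hS _ huAl _ hy
            rw [List.append_assoc, List.singleton_append] at h
            exact h
          rcases shape_split hsh hruPr.dol_notmem with ⟨_, hc⟩ | ⟨_, hc⟩ | ⟨_, Q', hQ', hc⟩
          · exact absurd (show (dol : Alph α) ∈ t ++ dol :: q by simp) hc.dol_notmem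
          · exact absurd (show (dol : Alph α) ∈ t ++ dol :: q by simp) hc.dol_notmem
          · obtain ⟨ht0, hq'⟩ := nil_of_append_eq_cons hc hdt
            subst ht0
            simp only [List.cons.injEq, true_and] at hq'
            right
            exact ⟨q, by rw [hq']; exact hQ', by simp⟩
      · -- two-dollar suffix : contradiction
        exfalso
        have htPr : AllPr t := (allPr_append.1 hPrt).2
        rcases hAl1 u huAl with huPl | ⟨ru, hruPr, hueq⟩
        · have hsh : Shape ((u ++ t) ++ dol :: (dol :: Q)) := by
            have h := hS u huAl _ hy
            rw [hqEq, ← List.append_assoc] at h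
            exact h
          rcases shape_split hsh (notmem_append huPl.dol_notmem hdt) with
            ⟨_, hc⟩ | ⟨_, hc⟩ | ⟨hc, _⟩
          · exact hc.dol_notmem (by simp)
          · exact hc.dol_notmem (by simp)
          · exact hune (allPl_allPr_nil huPl (allPr_append.1 hc).1)
        · rw [hueq] at huAl
          have hsh : Shape (ru ++ dol :: (t ++ dol :: dol :: Q)) := by
            have h := hS _ huAl _ hy
            rw [hqEq, List.append_assoc, List.singleton_append] at h
            exact h
          rcases shape_split hsh hruPr.dol_notmem with ⟨_, hc⟩ | ⟨_, hc⟩ | ⟨_, Q', hQ', hc⟩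
          · exact hc.dol_notmem (by simp)
          · exact hc.dol_notmem (by simp)
          · obtain ⟨ht0, hq'⟩ := nil_of_append_eq_cons hc htPr.dol_notmem
            simp only [List.cons.injEq, true_and] at hq'
            exact hQ'.dol_notmem (by rw [← hq']; simp)
    · left
      have h := shape_nodol (hS x₀ hx₀ _ hy)
        (notmem_append hx₀Pl.dol_notmem hdy)
      exact (allPl_append.1 h).2
  ----------------------------------------------------------------
  -- Conclusion
  ----------------------------------------------------------------
  constructor
  · intro x hx
    rcases hAl1 x hx with h | ⟨q, hq, rfl⟩
    · exact Or.inl h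
    · exact Or.inr (Language.mem_mul.2 ⟨q, hq, [dol], rfl, rfl⟩)
  · intro y hy
    rcases hAr1 y hy with h | ⟨q, hq, rfl⟩
    · exact Or.inl h
    · exact Or.inr (Language.mem_mul.2 ⟨[dol], rfl, q, hq, rfl⟩)
end

section
/- With A as below and A₁ := L₁ ∪ L₁'$, A₂ := L₂ ∪ $L₂': if L = L₁L₂ then A = A₁ · A₂. -/
lemma lmap_mul {α : Type} (f : α → Alph α) (L M : Language α) :
    lmap f (L * M) = lmap f L * lmap f M := by
  ext w
  constructor
  · rintro ⟨v, ⟨a, ha, b, hb, rfl⟩, rfl⟩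
    exact ⟨a.map f, ⟨a, ha, rfl⟩, b.map f, ⟨b, hb, rfl⟩, List.map_append.symm⟩
  · rintro ⟨x, ⟨a, ha, rfl⟩, y, ⟨b, hb, rfl⟩, rfl⟩
    exact ⟨a ++ b, ⟨a, ha, b, hb, rfl⟩, List.map_append.symm⟩

lemma sing_mul_sing {α : Type} (x y : List α) :
    (({x} : Language α) * {y}) = ({x ++ y} : Language α) := by
  ext w
  constructor
  · rintro ⟨a, ha, b, hb, rfl⟩
    change a = x at ha; change b = y at hb
    subst ha; subst hb; rfl
  · rintro h
    change w = x ++ y at h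
    exact ⟨x, rfl, y, rfl, h.symm⟩

lemma expand {β : Type} (P Q R S : Language β) :
    (P ⊔ Q) * (R ⊔ S) = P * R ⊔ P * S ⊔ Q * R ⊔ Q * S := by
  calc (P ⊔ Q) * (R ⊔ S) = P * (R ⊔ S) ⊔ Q * (R ⊔ S) := right_distrib P Q (R ⊔ S)
    _ = (P * R ⊔ P * S) ⊔ (Q * R ⊔ Q * S) := by
        rw [show P * (R ⊔ S) = P * R ⊔ P * S from left_distrib P R S,
           show Q * (R ⊔ S) = Q * R ⊔ Q * S from left_distrib Q R S]
    _ = P * R ⊔ P * S ⊔ Q * R ⊔ Q * S := by rw [← sup_assoc]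

/-- If `L = L₁L₂` then `A = A₁ ⋅ A₂` where `A₁ = L₁ ∪ L₁'$` and `A₂ = L₂ ∪ $L₂'`. -/
theorem stmt9 {α : Type} (L L₁ L₂ : Language α) (h : L = L₁ * L₂) :
    bigA L L₁ L₂ =
      (lmap pl L₁ ⊔ lmap pr L₁ * {[dol]}) *
        (lmap pl L₂ ⊔ ({[dol]} : Language (Alph α)) * lmap pr L₂) := by
  have key : (lmap pr L₁ * {[dol]}) * (({[dol]} : Language (Alph α)) * lmap pr L₂)
      = lmap pr L₁ * {[dol, dol]} * lmap pr L₂ := by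
    rw [mul_assoc (lmap pr L₁), ← mul_assoc ({[dol]} : Language (Alph α)),
      sing_mul_sing, ← mul_assoc]
    rfl
  rw [expand, key, ← mul_assoc (lmap pl L₁), bigA, h, lmap_mul]
end

section
/- Let (Θ, H, V, n) be a relation-tiling instance and define, over the alphabet Θ × [1,n²]: L₁ = {(t₁,1)(t₂,2)…(t_m,m) | m ≤ n²−2}, L₂ = the set of words (t_m,m)(t_{m+1},m+1)…(t_{n²},n²) such that either (m ∉ nℤ, m ≤ n², and (t_m,t_{m+1}) ∉ H) or (m ≤ n²−n and (t_m,t_{m+n}) ∉ V), and L = L₁L₂ ∪ {(t₁,1)(t₂,2)…(t_{n²},n²)}. Then L = L₁L₂ if and only if there is no legal tiling, i.e., no T : [1,n²] → Θ with (T(m),T(m+1)) ∈ H for all 1 ≤ m < n² with m ∉ nℤ, and (T(m),T(m+n)) ∈ V for all 1 ≤ m ≤ n²−n. -/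
/-- The word `(t_a, a)(t_{a+1}, a+1) … (t_b, b)` over the alphabet `Θ × ℕ`
(empty if `b + 1 ≤ a`). -/
def seg {Θ : Type} (t : ℕ → Θ) (a b : ℕ) : List (Θ × ℕ) :=
  (List.range (b + 1 - a)).map fun i => (t (a + i), a + i)

lemma seg_length {Θ : Type} (t : ℕ → Θ) (a b : ℕ) : (seg t a b).length = b + 1 - a := by
  simp [seg]

lemma seg_append {Θ : Type} (t : ℕ → Θ) (a b c : ℕ) (h1 : a ≤ b + 1) (h2 : b ≤ c) :
    seg t a b ++ seg t (b + 1) c = seg t a c := by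
  unfold seg
  rw [show c + 1 - a = (b + 1 - a) + (c - b) by omega, List.range_add, List.map_append,
    List.map_map]
  rw [show c + 1 - (b + 1) = c - b by omega]
  congr 1
  apply List.map_congr_left
  intro i hi
  simp only [Function.comp]
  rw [show a + (b + 1 - a + i) = b + 1 + i by omega]

lemma seg_eq_of_append {Θ : Type} (T t' t : ℕ → Θ) (m' m N : ℕ)
    (h : seg t' 1 m' ++ seg t m N = seg T 1 N) (hm1 : 1 ≤ m) (hmN : m ≤ N) :
    ∀ k, m ≤ k → k ≤ N → t k = T k := by
  have hlen := congrArg List.length h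
  simp only [List.length_append, seg_length] at hlen
  intro k hk1 hk2
  have hi : k - 1 < (seg T 1 N).length := by rw [seg_length]; omega
  have := List.getElem_of_eq h (by rw [← h] at hi; exact hi)
  rw [List.getElem_append_right (by rw [seg_length]; omega)] at this
  simp only [seg_length] at this
  simp only [seg, List.getElem_map, List.getElem_range] at this
  rw [show m + (k - 1 - (m' + 1 - 1)) = k by omega, show 1 + (k - 1) = k by omega] at this
  exact congrArg Prod.fst this

/-- `L₁ = {(t₁,1)…(t_m,m) | m ≤ n² - 2}`. -/
def tilingL1 (Θ : Type) (n : ℕ) : Language (Θ × ℕ) :=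
  {w | ∃ (t : ℕ → Θ) (m : ℕ), m ≤ n ^ 2 - 2 ∧ w = seg t 1 m}

/-- `L₂`: words `(t_m,m)…(t_{n²},n²)` with a horizontal fault
(`m ∉ nℤ`, `m ≤ n²`, `(t_m,t_{m+1}) ∉ H`) or a vertical fault
(`m ≤ n² - n`, `(t_m,t_{m+n}) ∉ V`). -/
def tilingL2 {Θ : Type} (H V : Set (Θ × Θ)) (n : ℕ) : Language (Θ × ℕ) :=
  {w | ∃ (t : ℕ → Θ) (m : ℕ), 1 ≤ m ∧ w = seg t m (n ^ 2) ∧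
      ((m ≤ n ^ 2 ∧ ¬ n ∣ m ∧ (t m, t (m + 1)) ∉ H) ∨
       (m ≤ n ^ 2 - n ∧ (t m, t (m + n)) ∉ V))}

/-- The full correctly-numbered words `(t₁,1)…(t_{n²},n²)`. -/
def tilingFull (Θ : Type) (n : ℕ) : Language (Θ × ℕ) :=
  {w | ∃ t : ℕ → Θ, w = seg t 1 (n ^ 2)}

/-- With `L = L₁L₂ ∪ {(t₁,1)…(t_{n²},n²)}`, one has `L = L₁L₂` iff
there is no legal tiling. -/
theorem stmt12 {Θ : Type} (H V : Set (Θ × Θ)) (n : ℕ) :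
    tilingL1 Θ n * tilingL2 H V n ⊔ tilingFull Θ n = tilingL1 Θ n * tilingL2 H V n ↔
      ¬ ∃ T : ℕ → Θ,
          (∀ m, 1 ≤ m → m < n ^ 2 → ¬ n ∣ m → (T m, T (m + 1)) ∈ H) ∧
          (∀ m, 1 ≤ m → m ≤ n ^ 2 - n → (T m, T (m + n)) ∈ V) := by

  have hn : n ≤ n ^ 2 := Nat.le_self_pow (by norm_num) n
  have h0 : n = 0 → n ^ 2 = 0 := by intro h; simp [h]
  rw [sup_eq_left]
  constructor
  · intro hsub
    rintro ⟨T, hH, hV⟩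
    have hmem : seg T 1 (n ^ 2) ∈ tilingL1 Θ n * tilingL2 H V n := hsub ⟨T, rfl⟩
    obtain ⟨w₁, ⟨t', m', hm', rfl⟩, w₂, ⟨t, m, hm1, rfl, hfault⟩, heq⟩ :=
      Language.mem_mul.mp hmem
    have hmN : m ≤ n ^ 2 := by
      rcases hfault with ⟨h1, _⟩ | ⟨h1, _⟩ <;> omega
    have key := seg_eq_of_append T t' t m' m (n ^ 2) heq hm1 hmN
    rcases hfault with ⟨h1, hnd, hf⟩ | ⟨h1, hf⟩
    · have hlt : m < n ^ 2 := by
        rcases Nat.lt_or_ge m (n ^ 2) with h | h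
        · exact h
        · exfalso; apply hnd
          have : m = n ^ 2 := by omega
          rw [this, pow_two]; exact Dvd.intro n rfl
      apply hf
      rw [key m le_rfl hmN, key (m + 1) (by omega) (by omega)]
      exact hH m hm1 hlt hnd
    · apply hf
      rw [key m le_rfl hmN, key (m + n) (by omega) (by omega)]
      exact hV m hm1 h1
  · rintro hno w ⟨T, rfl⟩
    have hnl : ¬ ((∀ m, 1 ≤ m → m < n ^ 2 → ¬ n ∣ m → (T m, T (m + 1)) ∈ H) ∧
        (∀ m, 1 ≤ m → m ≤ n ^ 2 - n → (T m, T (m + n)) ∈ V)) := fun h => hno ⟨T, h⟩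
    rw [not_and_or] at hnl
    rcases hnl with h | h
    · push_neg at h
      obtain ⟨m, hm1, hlt, hnd, hf⟩ := h
      refine Language.mem_mul.mpr ⟨seg T 1 (m - 1), ⟨T, m - 1, by omega, rfl⟩,
        seg T m (n ^ 2), ⟨T, m, hm1, rfl, Or.inl ⟨by omega, hnd, hf⟩⟩, ?_⟩
      rw [show m = (m - 1) + 1 by omega]
      exact seg_append T 1 (m - 1) (n ^ 2) (by omega) (by omega)
    · push_neg at h
      obtain ⟨m, hm1, hle, hf⟩ := h
      refine Language.mem_mul.mpr ⟨seg T 1 (m - 1), ⟨T, m - 1, by omega, rfl⟩,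
        seg T m (n ^ 2), ⟨T, m, hm1, rfl, Or.inr ⟨hle, hf⟩⟩, ?_⟩
      rw [show m = (m - 1) + 1 by omega]
      exact seg_append T 1 (m - 1) (n ^ 2) (by omega) (by omega)
end

section
/- With L₁, L₂ as in the tiling reduction, every word in {(t₁,1)(t₂,2)…(t_{n²},n²) | t_i ∈ Θ} ∩ L₁L₂ corresponds to a function T : [1,n²] → Θ, T(j) = t_j, that violates at least one of the tiling constraints (some m with m ∉ nℤ and (t_m,t_{m+1}) ∉ H, or some m ≤ n²−n with (t_m,t_{m+n}) ∉ V). -/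
lemma seg_getElem? {Θ : Type} (t : ℕ → Θ) (a b i : ℕ) (h : i < b + 1 - a) :
    (seg t a b)[i]? = some (t (a + i), a + i) := by
  simp [seg, List.getElem?_map, List.getElem?_range h]

lemma key {Θ : Type} (t t₂ : ℕ → Θ) (u : List (Θ × ℕ)) (N m : ℕ)
    (huv : u ++ seg t₂ m N = seg t 1 N) (i : ℕ) (hi : i < N + 1 - m) :
    t₂ (m + i) = t (m + i) := by
  have hlen := congrArg List.length huv
  simp [seg_length] at hlen
  have h1 : (u ++ seg t₂ m N)[u.length + i]? = (seg t₂ m N)[i]? := by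
    rw [List.getElem?_append_right (Nat.le_add_right _ _)]
    simp
  rw [huv, seg_getElem? t₂ m N i hi] at h1
  rw [seg_getElem? t 1 N _ (by omega)] at h1
  have h2 := Option.some.inj h1
  have hc2 : m + i = 1 + (u.length + i) := by
    have := congrArg Prod.snd h2
    simpa using this.symm
  have := congrArg Prod.fst h2
  simp at this
  rw [← hc2] at this
  exact this.symm

/-- Every full correctly-numbered word lying in `L₁L₂` corresponds to a tiling
that violates one of the constraints. -/
theorem stmt13 {Θ : Type} (H V : Set (Θ × Θ)) (n : ℕ) :
    ∀ t : ℕ → Θ, seg t 1 (n ^ 2) ∈ tilingL1 Θ n * tilingL2 H V n →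
      (∃ m, 1 ≤ m ∧ m ≤ n ^ 2 ∧ ¬ n ∣ m ∧ (t m, t (m + 1)) ∉ H) ∨
      (∃ m, 1 ≤ m ∧ m ≤ n ^ 2 - n ∧ (t m, t (m + n)) ∉ V) := by
  intro t hmem
  rw [Language.mem_mul] at hmem
  obtain ⟨u, hu, v, hv, huv⟩ := hmem
  obtain ⟨t₂, m, hm1, rfl, hfault⟩ := hv
  set N := n ^ 2 with hN
  rcases hfault with ⟨hmN, hdvd, hH⟩ | ⟨hmN, hV⟩
  · -- horizontal fault
    have hn : 1 ≤ n := by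
      rcases Nat.eq_zero_or_pos n with h | h
      · exfalso; rw [h] at hN; omega
      · exact h
    have hlt : m < N := by
      rcases Nat.lt_or_ge m N with h | h
      · exact h
      · exfalso; apply hdvd
        have : m = N := le_antisymm hmN h
        rw [this, hN, sq]; exact Dvd.intro n rfl
    have e0 := key t t₂ u N m huv 0 (by omega)
    have e1 := key t t₂ u N m huv 1 (by omega)
    simp at e0
    left
    exact ⟨m, hm1, hmN, hdvd, by rw [← e0, ← e1]; exact hH⟩
  · -- vertical fault
    have hn : n < N := by
      have : 1 ≤ N - n := le_trans hm1 hmN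
      omega
    have e0 := key t t₂ u N m huv 0 (by omega)
    have en := key t t₂ u N m huv n (by omega)
    simp at e0
    right
    exact ⟨m, hm1, hmN, by rw [← e0, ← en]; exact hV⟩
end
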